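/- For any composition μ = (μ_1, …, μ_r) of n, the minimal number of defects of a walk over μ equals the minimal number of defects of a walk over the reversed composition (μ_r, …, μ_1): min{ m : C^μ_m > 0 } = min{ m : C^{(μ_r, …, μ_1)}_m > 0 }. -/
import Mathlib


/-- `t` is a walk over the composition `μ` with `m` defects: `0 ≤ t i ≤ μ i`,
every partial sum `∑_{i<j} (μ i − 2 t i)` is at least `t j`, and the total
`∑ i (μ i − 2 t i)` equals `m`. -/
def IsWalk {r : ℕ} (μ : Fin r → ℕ) (m : ℕ) (t : Fin r → ℕ) : Prop :=
  (∀ i, t i ≤ μ i) ∧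
  (∀ j : Fin r, (t j : ℤ) ≤
      ∑ i ∈ Finset.univ.filter (fun i : Fin r => i < j), ((μ i : ℤ) - 2 * (t i : ℤ))) ∧
  (∑ i : Fin r, ((μ i : ℤ) - 2 * (t i : ℤ))) = (m : ℤ)

/-- `C^μ_m`: the number of walks over `μ` with `m` defects. -/
noncomputable def walkCount {r : ℕ} (μ : Fin r → ℕ) (m : ℕ) : ℕ :=
  Nat.card { t : Fin r → ℕ // IsWalk μ m t }

/-- `s_μ`: the minimal number of defects of a walk over `μ`. -/
noncomputable def minDefects {r : ℕ} (μ : Fin r → ℕ) : ℕ :=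
  sInf { m : ℕ | 0 < walkCount μ m }

/-- Reversing a composition does not change the minimal number of defects of a
walk over it. -/
def cEmb (r : ℕ) : Fin r ↪ Fin (r+1) := ⟨Fin.castSucc, Fin.castSucc_injective r⟩

@[simp] lemma cEmb_apply {r : ℕ} (i : Fin r) : cEmb r i = Fin.castSucc i := rfl

lemma filter_lt_castSucc {r : ℕ} (j : Fin r) :
    (Finset.univ.filter (fun i : Fin (r+1) => i < Fin.castSucc j)) =
      (Finset.univ.filter (fun i : Fin r => i < j)).map (cEmb r) := by
  ext i
  simp only [Finset.mem_filter, Finset.mem_univ, true_and, Finset.mem_map,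
     Fin.lt_def, Fin.coe_castSucc]
  constructor
  · intro h
    have hi : i.val < r := by have := j.isLt; omega
    exact ⟨⟨i.val, hi⟩, h, by simp [Fin.ext_iff]⟩
  · rintro ⟨a, ha, rfl⟩
    exact ha

lemma filter_lt_last {r : ℕ} :
    (Finset.univ.filter (fun i : Fin (r+1) => i < Fin.last r)) =
      Finset.univ.map (cEmb r) := by
  ext i
  simp only [Finset.mem_filter, Finset.mem_univ, true_and, Finset.mem_map,
     Fin.lt_def, Fin.val_last]
  constructor
  · intro h
    exact ⟨⟨i.val, h⟩, by simp [Fin.ext_iff]⟩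
  · rintro ⟨a, rfl⟩
    exact a.isLt

lemma isWalk_snoc {r : ℕ} (μ : Fin (r+1) → ℕ) (m m' tr : ℕ) (t' : Fin r → ℕ)
    (h : IsWalk (μ ∘ Fin.castSucc) m' t')
    (h1 : tr ≤ μ (Fin.last r)) (h2 : tr ≤ m')
    (h3 : (m : ℤ) = m' + μ (Fin.last r) - 2 * tr) :
    IsWalk μ m (Fin.snoc t' tr) := by
  obtain ⟨hb, hp, ht⟩ := h
  refine ⟨?_, ?_, ?_⟩
  · intro i
    induction i using Fin.lastCases with
    | last => simpa using h1
    | cast i => simpa using hb i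
  · intro j
    induction j using Fin.lastCases with
    | last =>
      rw [filter_lt_last, Finset.sum_map]
      simp only [cEmb_apply, Fin.snoc_castSucc, Fin.snoc_last]
      have : ∑ i : Fin r, ((μ (Fin.castSucc i) : ℤ) - 2 * (t' i : ℤ)) = (m' : ℤ) := ht
      rw [this]
      exact_mod_cast h2
    | cast j =>
      rw [filter_lt_castSucc, Finset.sum_map]
      simp only [cEmb_apply, Fin.snoc_castSucc]
      exact hp j
  · rw [Fin.sum_univ_castSucc]
    simp only [Fin.snoc_castSucc, Fin.snoc_last]
    have : ∑ i : Fin r, ((μ (Fin.castSucc i) : ℤ) - 2 * (t' i : ℤ)) = (m' : ℤ) := ht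
    rw [this]
    omega
lemma exists_walk : ∀ {r : ℕ} (μ : Fin r → ℕ) (m : ℕ),
    m % 2 = (∑ i, μ i) % 2 →
    (∀ j, 2 * μ j ≤ (∑ i, μ i) + m) →
    m ≤ ∑ i, μ i →
    ∃ t, IsWalk μ m t := by
  intro r
  induction r with
  | zero =>
    intro μ m _ _ hle
    have hm : m = 0 := by simpa using hle
    exact ⟨fun i => i.elim0, fun i => i.elim0, fun j => j.elim0, by simp [hm]⟩
  | succ r ih =>
    intro μ m hpar hbnd hle
    set a := μ (Fin.last r) with ha
    set μ' : Fin r → ℕ := μ ∘ Fin.castSucc with hμ'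
    set n' := ∑ i, μ' i with hn'
    have hsum : ∑ i, μ i = n' + a := by
      rw [Fin.sum_univ_castSucc]; rfl
    set M' := Finset.univ.sup μ' with hM'
    have hM'le : M' ≤ n' := by
      apply Finset.sup_le
      intro j _
      exact Finset.single_le_sum (fun i _ => Nat.zero_le _) (Finset.mem_univ j)
    have hbnd' : ∀ i : Fin r, 2 * μ' i ≤ n' + a + m := by
      intro i
      have := hbnd (Fin.castSucc i)
      rwa [hsum] at this
    have hM'bnd : 2 * M' ≤ n' + a + m := by
      rcases Nat.eq_zero_or_pos r with hr | hr
      · subst hr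
        simp [hM', Finset.univ_eq_empty]
      · have : (Finset.univ : Finset (Fin r)).Nonempty := by
          have : Nonempty (Fin r) := Fin.pos_iff_nonempty.mp hr
          exact Finset.univ_nonempty
        obtain ⟨j, _, hj⟩ := Finset.exists_mem_eq_sup Finset.univ this μ'
        rw [hM', hj]
        exact hbnd' j
    have habnd : 2 * a ≤ n' + a + m := by
      have := hbnd (Fin.last r)
      rwa [hsum] at this
    rw [hsum] at hpar hle
    set m'' := max (max (m - a) (a - m)) (max (n' % 2) (2 * M' - n')) with hm''
    have hμ'M : ∀ j : Fin r, μ' j ≤ M' := fun j => Finset.le_sup (Finset.mem_univ j)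
    obtain ⟨t', ht'⟩ := ih μ' m'' (by omega) (fun j => by have := hμ'M j; omega) (by omega)
    refine ⟨Fin.snoc t' ((m'' + a - m) / 2), isWalk_snoc μ m m'' _ t' ht' (by omega) (by omega) (by omega)⟩

lemma walk_bound {r : ℕ} {μ : Fin r → ℕ} {m : ℕ} {t : Fin r → ℕ} (h : IsWalk μ m t) :
    m % 2 = (∑ i, μ i) % 2 ∧ (∀ j, 2 * μ j ≤ (∑ i, μ i) + m) ∧ m ≤ ∑ i, μ i := by
  obtain ⟨hb, hp, ht⟩ := h
  have hsum : ((∑ i, μ i : ℕ) : ℤ) - 2 * ((∑ i, t i : ℕ) : ℤ) = (m : ℤ) := by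
    push_cast
    rw [Finset.mul_sum, ← Finset.sum_sub_distrib]
    exact ht
  refine ⟨by omega, ?_, by omega⟩
  intro j
  have hGnn : ∀ i : Fin r, (0:ℤ) ≤ (μ i : ℤ) - (t i : ℤ) := by
    intro i; have := hb i; omega
  have h1 : (t j : ℤ) ≤ ∑ i ∈ Finset.univ.filter (fun i => i < j), ((μ i : ℤ) - (t i : ℤ)) := by
    refine le_trans (hp j) (Finset.sum_le_sum ?_)
    intro i _
    have h0 : (0:ℤ) ≤ (t i : ℤ) := Int.natCast_nonneg _
    linarith
  have h2 : ∑ i ∈ Finset.univ.filter (fun i => i < j), ((μ i : ℤ) - (t i : ℤ)) ≤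
      ∑ i ∈ Finset.univ.erase j, ((μ i : ℤ) - (t i : ℤ)) := by
    apply Finset.sum_le_sum_of_subset_of_nonneg
    · intro i hi
      rw [Finset.mem_erase]
      exact ⟨ne_of_lt (Finset.mem_filter.mp hi).2, Finset.mem_univ i⟩
    · intro i _ _; exact hGnn i
  have h3 : ((μ j : ℤ) - (t j : ℤ)) + ∑ i ∈ Finset.univ.erase j, ((μ i : ℤ) - (t i : ℤ)) =
      ∑ i, ((μ i : ℤ) - (t i : ℤ)) := Finset.add_sum_erase _ (fun i => (μ i : ℤ) - (t i : ℤ)) (Finset.mem_univ j)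
  have h4 : ∑ i, ((μ i : ℤ) - (t i : ℤ)) = ((∑ i, μ i : ℕ) : ℤ) - ((∑ i, t i : ℕ) : ℤ) := by
    push_cast
    rw [Finset.sum_sub_distrib]
  have hfin : (2 * μ j : ℤ) ≤ ((∑ i, μ i : ℕ) : ℤ) + (m : ℤ) := by
    have := hGnn j
    linarith
  exact_mod_cast hfin

lemma walk_finite {r : ℕ} (μ : Fin r → ℕ) (m : ℕ) :
    Finite {t : Fin r → ℕ // IsWalk μ m t} := by
  have hsub : {t : Fin r → ℕ | IsWalk μ m t} ⊆ Set.Icc 0 μ := by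
    intro t ht
    refine Set.mem_Icc.mpr ⟨?_, ?_⟩
    · intro i; exact Nat.zero_le _
    · intro i; exact ht.1 i
  exact ((Set.finite_Icc 0 μ).subset hsub).to_subtype

lemma walkCount_pos_iff {r : ℕ} (μ : Fin r → ℕ) (m : ℕ) :
    0 < walkCount μ m ↔
      (m % 2 = (∑ i, μ i) % 2 ∧ (∀ j, 2 * μ j ≤ (∑ i, μ i) + m) ∧ m ≤ ∑ i, μ i) := by
  have hf := walk_finite μ m
  rw [walkCount, Nat.card_pos_iff]
  constructor
  · rintro ⟨⟨⟨t, ht⟩⟩, _⟩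
    exact walk_bound ht
  · rintro ⟨h1, h2, h3⟩
    obtain ⟨t, ht⟩ := exists_walk μ m h1 h2 h3
    exact ⟨⟨⟨t, ht⟩⟩, hf⟩

theorem minDefects_reverse {r : ℕ} (μ : Fin r → ℕ) :
    minDefects μ = minDefects (μ ∘ Fin.rev) := by
  unfold minDefects
  congr 1
  ext m
  simp only [Set.mem_setOf_eq, walkCount_pos_iff]
  have hsum : (∑ i, (μ ∘ Fin.rev) i) = ∑ i, μ i :=
    Fintype.sum_equiv Fin.revPerm (μ ∘ Fin.rev) μ (fun i => rfl)
  rw [hsum]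
  constructor
  · rintro ⟨h1, h2, h3⟩
    refine ⟨h1, fun j => ?_, h3⟩
    have := h2 (Fin.rev j)
    simpa [Function.comp, Fin.rev_rev] using this
  · rintro ⟨h1, h2, h3⟩
    exact ⟨h1, fun j => by simpa [Fin.rev_rev] using h2 (Fin.rev j), h3⟩
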